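/- Let (A,B,C,f,g) be a three-term complex in 𝒞, i.e. f : A ⟶ B, g : B ⟶ C with f ≫ g = 0. Suppose that Hom(A⟦1⟧, C) = 0, i.e. every morphism A⟦1⟧ ⟶ C is zero. Then any two convolutions of the complex are isomorphic: if each of Z₁ and Z₂ is a convolution of some right Postnikov system or of some left Postnikov system associated to (A,B,C,f,g), then Z₁ ≅ Z₂. -/

import Mathlib

open CategoryTheory Category Limits Pretriangulated

variable {𝒞 : Type*} [Category 𝒞] [HasZeroObject 𝒞] [HasShift 𝒞 ℤ] [Preadditive 𝒞]
  [∀ n : ℤ, (CategoryTheory.shiftFunctor 𝒞 n).Additive] [Pretriangulated 𝒞]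

/-- `Z` is a convolution of some right Postnikov system associated to the three-term
complex `A ⟶f B ⟶g C`: there are a distinguished triangle `B ⟶g C ⟶h X ⟶i B⟦1⟧` and a
morphism `j : A⟦1⟧ ⟶ X` with `j ≫ i = f⟦1⟧` such that `Z` is a cone of `j`. -/
def IsRightPostnikovConvolution {A B C : 𝒞} (f : A ⟶ B) (g : B ⟶ C) (Z : 𝒞) : Prop :=
  ∃ (X : 𝒞) (h : C ⟶ X) (i : X ⟶ B⟦(1 : ℤ)⟧) (j : A⟦(1 : ℤ)⟧ ⟶ X)
    (p : X ⟶ Z) (q : Z ⟶ A⟦(1 : ℤ)⟧⟦(1 : ℤ)⟧),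
    (Triangle.mk g h i ∈ distTriang 𝒞) ∧ j ≫ i = f⟦(1 : ℤ)⟧' ∧
    Triangle.mk j p q ∈ distTriang 𝒞

/-- `Z` is a convolution of some left Postnikov system associated to the three-term
complex `A ⟶f B ⟶g C`: there are a distinguished triangle `A ⟶f B ⟶k Y ⟶l A⟦1⟧` and a
morphism `m : Y ⟶ C` with `k ≫ m = g` such that `Z` is a cone of `m`. -/
def IsLeftPostnikovConvolution {A B C : 𝒞} (f : A ⟶ B) (g : B ⟶ C) (Z : 𝒞) : Prop :=
  ∃ (Y : 𝒞) (k : B ⟶ Y) (l : Y ⟶ A⟦(1 : ℤ)⟧) (m : Y ⟶ C)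
    (p : C ⟶ Z) (q : Z ⟶ Y⟦(1 : ℤ)⟧),
    (Triangle.mk f k l ∈ distTriang 𝒞) ∧ k ≫ m = g ∧
    Triangle.mk m p q ∈ distTriang 𝒞

lemma my_neg₁₂_distinguished {A B C' : 𝒞} (a : A ⟶ B) (b : B ⟶ C') (c : C' ⟶ A⟦(1 : ℤ)⟧)
    (h : Triangle.mk (-a) (-b) c ∈ distTriang 𝒞) : Triangle.mk a b c ∈ distTriang 𝒞 := by
  refine isomorphic_distinguished _ h _
    (Triangle.isoMk _ _ (Iso.refl _) ⟨-𝟙 B, -𝟙 B, by dsimp [Triangle.mk]; simp, by dsimp [Triangle.mk]; simp⟩ (Iso.refl _) ?_ ?_ ?_) <;>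
  · dsimp [Triangle.mk]; simp

lemma my_cone_unique {X X' Y Z Z' : 𝒞} {a : X ⟶ Y} {a' : X' ⟶ Y} (e : X ≅ X')
    (hcomm : a = e.hom ≫ a')
    {b : Y ⟶ Z} {c : Z ⟶ X⟦(1 : ℤ)⟧} {b' : Y ⟶ Z'} {c' : Z' ⟶ X'⟦(1 : ℤ)⟧}
    (h : Triangle.mk a b c ∈ distTriang 𝒞) (h' : Triangle.mk a' b' c' ∈ distTriang 𝒞) :
    Nonempty (Z ≅ Z') := by
  obtain ⟨φ₃, h₁, h₂⟩ := complete_distinguished_triangle_morphism _ _ h h' e.hom (𝟙 Y)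
    (by dsimp [Triangle.mk]; simpa using hcomm)
  let ψ : Triangle.mk a b c ⟶ Triangle.mk a' b' c' :=
    { hom₁ := e.hom, hom₂ := 𝟙 Y, hom₃ := φ₃,
      comm₁ := by dsimp [Triangle.mk]; simpa using hcomm, comm₂ := by simpa using h₁, comm₃ := by simpa using h₂ }
  have : IsIso ψ.hom₃ := isIso₃_of_isIso₁₂ ψ h h' (by dsimp [ψ, Triangle.mk]; infer_instance)
    (by dsimp [ψ, Triangle.mk]; infer_instance)
  exact ⟨@asIso _ _ _ _ ψ.hom₃ this⟩

lemma my_left_left {A B C : 𝒞} (f : A ⟶ B) (g : B ⟶ C)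
    (hvanish : ∀ w : A⟦(1 : ℤ)⟧ ⟶ C, w = 0) {Z₁ Z₂ : 𝒞}
    (h₁ : IsLeftPostnikovConvolution f g Z₁) (h₂ : IsLeftPostnikovConvolution f g Z₂) :
    Nonempty (Z₁ ≅ Z₂) := by
  obtain ⟨Y₁, k₁, l₁, m₁, p₁, q₁, hT₁, hk₁, hC₁⟩ := h₁
  obtain ⟨Y₂, k₂, l₂, m₂, p₂, q₂, hT₂, hk₂, hC₂⟩ := h₂
  obtain ⟨c, hc₁, hc₂⟩ := complete_distinguished_triangle_morphism _ _ hT₁ hT₂ (𝟙 A) (𝟙 B)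
    (by dsimp [Triangle.mk]; simp)
  dsimp [Triangle.mk] at hc₁ hc₂
  rw [id_comp] at hc₁
  change Y₁ ⟶ Y₂ at c
  let ψ : Triangle.mk f k₁ l₁ ⟶ Triangle.mk f k₂ l₂ :=
    { hom₁ := 𝟙 A, hom₂ := 𝟙 B, hom₃ := c,
      comm₁ := by dsimp [Triangle.mk]; simp, comm₂ := by dsimp [Triangle.mk]; simpa using hc₁, comm₃ := by dsimp [Triangle.mk]; simpa using hc₂ }
  have : IsIso ψ.hom₃ := isIso₃_of_isIso₁₂ ψ hT₁ hT₂ (by dsimp [ψ, Triangle.mk]; infer_instance)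
    (by dsimp [ψ, Triangle.mk]; infer_instance)
  have hciso : IsIso c := this
  have hm : m₁ = c ≫ m₂ := by
    have h0 : k₁ ≫ (m₁ - c ≫ m₂) = 0 := by
      rw [Preadditive.comp_sub, hk₁, ← assoc]
      rw [hc₁, hk₂, sub_self]
    obtain ⟨w, hw⟩ := Triangle.yoneda_exact₃ _ hT₁ (m₁ - c ≫ m₂) h0
    dsimp [Triangle.mk] at hw
    rw [hvanish w, comp_zero, sub_eq_zero] at hw
    exact hw
  exact my_cone_unique (asIso c) hm hC₁ hC₂

lemma my_right_to_left [IsTriangulated 𝒞] {A B C : 𝒞} {f : A ⟶ B} {g : B ⟶ C}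
    {Z : 𝒞} (h : IsRightPostnikovConvolution f g Z) : IsLeftPostnikovConvolution f g Z := by
  obtain ⟨X, h', i, j, p, q, hT, hji, hC⟩ := h
  obtain ⟨Y, k, l, hTf⟩ := distinguished_cocone_triangle f
  -- triangle on f⟦1⟧' : rotate thrice and strip the signs on the first two maps
  have hTf1 : Triangle.mk (f⟦(1 : ℤ)⟧') (k⟦(1 : ℤ)⟧') (-(l⟦(1 : ℤ)⟧')) ∈ distTriang 𝒞 := by
    apply my_neg₁₂_distinguished
    have := rot_of_distTriang _ (rot_of_distTriang _ (rot_of_distTriang _ hTf))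
    exact this
  -- triangle on i : rotate twice
  have hTi : Triangle.mk i (-(g⟦(1 : ℤ)⟧')) (-(h'⟦(1 : ℤ)⟧')) ∈ distTriang 𝒞 := by
    have := rot_of_distTriang _ (rot_of_distTriang _ hT)
    exact this
  have O := Triangulated.someOctahedron (u₁₂ := j) (u₂₃ := i) (u₁₃ := f⟦(1 : ℤ)⟧') hji hC hTi hTf1
  -- O.m₃ : Y⟦1⟧ ⟶ C⟦1⟧, O.comm₃ : k⟦1⟧' ≫ O.m₃ = -(g⟦1⟧')
  let m : Y ⟶ C := -(shiftFunctor 𝒞 (1 : ℤ)).preimage O.m₃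
  have hm1 : m⟦(1 : ℤ)⟧' = -O.m₃ := by
    dsimp [m]; rw [Functor.map_neg, Functor.map_preimage]
  have hkm : k ≫ m = g := by
    apply (shiftFunctor 𝒞 (1 : ℤ)).map_injective
    rw [Functor.map_comp, hm1, Preadditive.comp_neg, O.comm₃, neg_neg]
  obtain ⟨Z', p', q', hCm⟩ := distinguished_cocone_triangle m
  -- rotate thrice: triangle on -(m⟦1⟧') = O.m₃
  have hCm1 : Triangle.mk O.m₃ (-(p'⟦(1 : ℤ)⟧')) (-(q'⟦(1 : ℤ)⟧')) ∈ distTriang 𝒞 := by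
    have h3 := rot_of_distTriang _ (rot_of_distTriang _ (rot_of_distTriang _ hCm))
    have : Triangle.mk (-(m⟦(1 : ℤ)⟧')) (-(p'⟦(1 : ℤ)⟧')) (-(q'⟦(1 : ℤ)⟧')) ∈ distTriang 𝒞 := h3
    rw [hm1, neg_neg] at this
    exact this
  -- rotate octahedron triangle once: triangle on O.m₃ with cone Z⟦1⟧
  have hOrot := rot_of_distTriang _ O.mem
  have hZZ' : Nonempty (Z'⟦(1 : ℤ)⟧ ≅ Z⟦(1 : ℤ)⟧) := by
    refine my_cone_unique (Iso.refl _) ?_ hCm1 hOrot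
    simp
  obtain ⟨e1⟩ := hZZ'
  let e : Z' ≅ Z := (shiftFunctor 𝒞 (1 : ℤ)).preimageIso e1
  refine ⟨Y, k, l, m, p' ≫ e.hom, e.inv ≫ q', hTf, hkm, ?_⟩
  refine isomorphic_distinguished _ hCm _ (Triangle.isoMk _ _ (Iso.refl _) (Iso.refl _) e.symm
    ?_ ?_ ?_) <;> dsimp [Triangle.mk] <;> simp

/-- If every morphism `A⟦1⟧ ⟶ C` is zero, then any two convolutions
(of right or left Postnikov systems) of the three-term complex `A ⟶f B ⟶g C` are
isomorphic. -/
theorem convolutions_iso_of_hom_shift_eq_zero [IsTriangulated 𝒞]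
    {A B C : 𝒞} (f : A ⟶ B) (g : B ⟶ C) (hfg : f ≫ g = 0)
    (hvanish : ∀ w : A⟦(1 : ℤ)⟧ ⟶ C, w = 0)
    {Z₁ Z₂ : 𝒞}
    (h₁ : IsRightPostnikovConvolution f g Z₁ ∨ IsLeftPostnikovConvolution f g Z₁)
    (h₂ : IsRightPostnikovConvolution f g Z₂ ∨ IsLeftPostnikovConvolution f g Z₂) :
    Nonempty (Z₁ ≅ Z₂) := by
  have l₁ : IsLeftPostnikovConvolution f g Z₁ := h₁.elim my_right_to_left id
  have l₂ : IsLeftPostnikovConvolution f g Z₂ := h₂.elim my_right_to_left id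
  exact my_left_left f g hvanish l₁ l₂
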